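/- Let H ⪰ 0 be symmetric, B ≻ 0 symmetric, g ≠ 0, γ > 0, and x⁺ := x − (H + (‖g‖_*/γ)B)^{-1} g. Let A be any symmetric matrix (the true Hessian). Then ⟨A(x⁺−x), x⁺−x⟩ ≤ ⟨g, x−x⁺⟩ + ‖x⁺−x‖·(‖(A−H)(x⁺−x)‖_* − (‖g‖_*·‖x⁺−x‖)/γ). -/

import Mathlib

open Matrix

noncomputable def normB {n : ℕ} (B : Matrix (Fin n) (Fin n) ℝ) (h : Fin n → ℝ) : ℝ :=
  Real.sqrt (h ⬝ᵥ B *ᵥ h)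

noncomputable def dualNormB {n : ℕ} (B : Matrix (Fin n) (Fin n) ℝ) (s : Fin n → ℝ) : ℝ :=
  Real.sqrt (s ⬝ᵥ B⁻¹ *ᵥ s)

lemma dot_self_nonneg' {n : ℕ} (a : Fin n → ℝ) : 0 ≤ a ⬝ᵥ a :=
  Finset.sum_nonneg fun i _ => mul_self_nonneg _

lemma dot_cs {n : ℕ} (a b : Fin n → ℝ) :
    a ⬝ᵥ b ≤ Real.sqrt (a ⬝ᵥ a) * Real.sqrt (b ⬝ᵥ b) := by
  have h := Finset.sum_mul_sq_le_sq_mul_sq Finset.univ a b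
  have : a ⬝ᵥ b ≤ Real.sqrt ((a ⬝ᵥ a) * (b ⬝ᵥ b)) := by
    calc a ⬝ᵥ b ≤ |a ⬝ᵥ b| := le_abs_self _
    _ = Real.sqrt ((a ⬝ᵥ b) ^ 2) := (Real.sqrt_sq_eq_abs _).symm
    _ ≤ Real.sqrt ((a ⬝ᵥ a) * (b ⬝ᵥ b)) := by
        apply Real.sqrt_le_sqrt
        simpa [dotProduct, pow_two, mul_comm] using h
  rwa [Real.sqrt_mul (dot_self_nonneg' a)] at this

open scoped MatrixOrder in
lemma psd_cs {n : ℕ} {P : Matrix (Fin n) (Fin n) ℝ} (hP : P.PosSemidef) (a b : Fin n → ℝ) :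
    a ⬝ᵥ P *ᵥ b ≤ Real.sqrt (a ⬝ᵥ P *ᵥ a) * Real.sqrt (b ⬝ᵥ P *ᵥ b) := by
  set S := CFC.sqrt P with hSdef
  have hSS : S * S = P := CFC.sqrt_mul_sqrt_self P hP.nonneg
  have hSsymm : Sᵀ = S := by
    have := (Matrix.nonneg_iff_posSemidef.mp (CFC.sqrt_nonneg P)).isHermitian
    rw [← hSdef, Matrix.IsHermitian, Matrix.conjTranspose_eq_transpose_of_trivial] at this
    exact this
  have key : ∀ u v : Fin n → ℝ, u ⬝ᵥ P *ᵥ v = (S *ᵥ u) ⬝ᵥ (S *ᵥ v) := by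
    intro u v
    rw [← hSS, ← Matrix.mulVec_mulVec, Matrix.dotProduct_mulVec u S,
      ← Matrix.mulVec_transpose, hSsymm]
  rw [key a b, key a a, key b b]
  exact dot_cs _ _

theorem regularized_newton_step_local_bound {n : ℕ}
    (H B A : Matrix (Fin n) (Fin n) ℝ)
    (hH : H.PosSemidef) (hB : B.PosDef) (hA : A.IsSymm)
    (x g : Fin n → ℝ) (hg : g ≠ 0) (γ : ℝ) (hγ : 0 < γ)
    (xp : Fin n → ℝ)
    (hxp : xp = x - (H + (dualNormB B g / γ) • B)⁻¹ *ᵥ g) :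
    (xp - x) ⬝ᵥ A *ᵥ (xp - x)
      ≤ g ⬝ᵥ (x - xp) + normB B (xp - x) *
          (dualNormB B ((A - H) *ᵥ (xp - x)) - dualNormB B g * normB B (xp - x) / γ) := by
  set r : ℝ := dualNormB B g / γ with hrdef
  set M : Matrix (Fin n) (Fin n) ℝ := H + r • B with hMdef
  set s : Fin n → ℝ := xp - x with hsdef
  -- positivity of r
  have hBinv : (B⁻¹).PosDef := hB.inv
  have hgBg : 0 < g ⬝ᵥ B⁻¹ *ᵥ g := by
    have := hBinv.dotProduct_mulVec_pos hg
    simpa using this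
  have hdual : 0 < dualNormB B g := Real.sqrt_pos.mpr hgBg
  have hr : 0 < r := div_pos hdual hγ
  -- M is positive definite
  have hrB : (r • B).PosDef := by
    refine ⟨?_, fun y hy => ?_⟩
    · unfold Matrix.IsHermitian
      rw [conjTranspose_smul]
      simp only [star_trivial]
      rw [hB.1.eq]
    · exact (hB.smul hr).2 hy
  have hM : M.PosDef := Matrix.PosDef.posSemidef_add hH hrB
  have hMdet : IsUnit M.det := isUnit_iff_ne_zero.mpr (ne_of_gt hM.det_pos)
  have hMs : M *ᵥ s = -g := by
    rw [hsdef, hxp]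
    have : x - M⁻¹ *ᵥ g - x = -(M⁻¹ *ᵥ g) := by abel
    rw [show x - (H + (dualNormB B g / γ) • B)⁻¹ *ᵥ g - x = -(M⁻¹ *ᵥ g) by
      rw [hMdef, hrdef]; abel]
    rw [mulVec_neg, mulVec_mulVec, Matrix.mul_nonsing_inv M hMdet, one_mulVec]
  -- H s = -g - r • (B *ᵥ s)
  have hHs : H *ᵥ s = -g - r • (B *ᵥ s) := by
    have : M *ᵥ s = H *ᵥ s + r • (B *ᵥ s) := by
      rw [hMdef, add_mulVec, smul_mulVec]
    rw [this] at hMs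
    linear_combination (norm := module) hMs
  -- decomposition
  have hdec : s ⬝ᵥ A *ᵥ s = s ⬝ᵥ ((A - H) *ᵥ s) + (- (g ⬝ᵥ s)) - r * (s ⬝ᵥ B *ᵥ s) := by
    have h1 : A *ᵥ s = (A - H) *ᵥ s + H *ᵥ s := by rw [sub_mulVec]; abel
    rw [h1, dotProduct_add, hHs]
    rw [dotProduct_sub, dotProduct_smul, dotProduct_neg, dotProduct_comm s g]
    simp only [smul_eq_mul]
    ring
  -- norms
  have hnn : 0 ≤ s ⬝ᵥ B *ᵥ s := by simpa using hB.posSemidef.dotProduct_mulVec_nonneg s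
  have hsBs : s ⬝ᵥ B *ᵥ s = normB B s * normB B s := by
    rw [normB, Real.mul_self_sqrt hnn]
  -- Cauchy-Schwarz for the (A-H) term
  have hCS : s ⬝ᵥ ((A - H) *ᵥ s) ≤ normB B s * dualNormB B ((A - H) *ᵥ s) := by
    set u : Fin n → ℝ := (A - H) *ᵥ s with hudef
    have hBu : B *ᵥ (B⁻¹ *ᵥ u) = u := by
      rw [mulVec_mulVec, Matrix.mul_nonsing_inv B (isUnit_iff_ne_zero.mpr (ne_of_gt hB.det_pos)),
        one_mulVec]
    have h1 : s ⬝ᵥ u = s ⬝ᵥ B *ᵥ (B⁻¹ *ᵥ u) := by rw [hBu]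
    have h2 : (B⁻¹ *ᵥ u) ⬝ᵥ B *ᵥ (B⁻¹ *ᵥ u) = u ⬝ᵥ B⁻¹ *ᵥ u := by
      rw [hBu, dotProduct_comm]
    calc s ⬝ᵥ u = s ⬝ᵥ B *ᵥ (B⁻¹ *ᵥ u) := h1
    _ ≤ Real.sqrt (s ⬝ᵥ B *ᵥ s) * Real.sqrt ((B⁻¹ *ᵥ u) ⬝ᵥ B *ᵥ (B⁻¹ *ᵥ u)) :=
        psd_cs hB.posSemidef _ _
    _ = normB B s * dualNormB B u := by rw [h2, normB, dualNormB]
  -- g ⬝ᵥ (x - xp) = -(g ⬝ᵥ s)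
  have hgs : g ⬝ᵥ (x - xp) = -(g ⬝ᵥ s) := by
    rw [hsdef, ← dotProduct_neg]
    congr 1
    abel
  rw [hgs, hdec]
  have hrs : r * (s ⬝ᵥ B *ᵥ s) = dualNormB B g * normB B s / γ * normB B s := by
    rw [hsBs, hrdef]; ring
  rw [hrs]
  nlinarith [hCS]
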